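/- Fix L > 0, k ≥ 1, l = arcsinh(1/(2 sinh L)), l_k = arcsinh(1/(2 sinh(kL))). Let C = {R e^{iθ} : 1 ≤ R ≤ e^{2l}, θ₁ ≤ θ ≤ π/2} ⊂ ℍ² with cos θ₁ = tanh L, and C_k = {R e^{iθ} : 1 ≤ R ≤ e^{2 l_k}, θ_k ≤ θ ≤ π/2} with cos θ_k = tanh(kL). Define h_k(R, θ) = (R^{l_k/l}, arccos(tanh(k·arccosh(1/sin θ)))). Then h_k maps C homeomorphically onto C_k. -/

import Mathlib

open Real Set

/-- The inverse hyperbolic cosine, `arccosh x = log (x + √(x² - 1))`. -/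
noncomputable def arccosh (x : ℝ) : ℝ := Real.log (x + Real.sqrt (x ^ 2 - 1))

/-- Fix `L > 0`, `k ≥ 1`, `l = arcsinh (1/(2 sinh L))`, `l_k = arcsinh (1/(2 sinh (kL)))`.
In polar coordinates `(R, θ)` on the upper half-plane, let
`C = {(R, θ) : 1 ≤ R ≤ e^{2l}, θ₁ ≤ θ ≤ π/2}` with `θ₁ = arccos (tanh L)` and
`C_k = {(R, θ) : 1 ≤ R ≤ e^{2 l_k}, θ_k ≤ θ ≤ π/2}` with `θ_k = arccos (tanh (kL))`.
Then `h_k (R, θ) = (R^{l_k/l}, arccos (tanh (k · arccosh (1 / sin θ))))` maps `C`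
homeomorphically onto `C_k`. -/
lemma my_tanh_lt_one (x : ℝ) : Real.tanh x < 1 := by
  rw [Real.tanh_eq_sinh_div_cosh, div_lt_one (Real.cosh_pos x)]
  nlinarith [Real.cosh_sub_sinh x, Real.exp_pos (-x)]

lemma my_tanh_nonneg {x : ℝ} (hx : 0 ≤ x) : 0 ≤ Real.tanh x := by
  rw [Real.tanh_eq_sinh_div_cosh]
  exact div_nonneg (Real.sinh_nonneg_iff.2 hx) (Real.cosh_pos x).le

lemma my_tanh_strictMono : StrictMono Real.tanh := by
  intro a b hab
  rw [Real.tanh_eq_sinh_div_cosh, Real.tanh_eq_sinh_div_cosh,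
    div_lt_div_iff₀ (Real.cosh_pos a) (Real.cosh_pos b)]
  have h2 : 0 < Real.sinh (b - a) := Real.sinh_pos_iff.2 (by linarith)
  rw [Real.sinh_sub] at h2
  nlinarith

lemma my_tanh_continuous : Continuous Real.tanh := by
  have : Real.tanh = fun x => Real.sinh x / Real.cosh x := by
    ext x; exact Real.tanh_eq_sinh_div_cosh x
  rw [this]
  exact Real.continuous_sinh.div Real.continuous_cosh fun x => (Real.cosh_pos x).ne'

lemma arccosh_one : arccosh 1 = 0 := by
  simp [arccosh]

lemma arccosh_eq_arsinh {x : ℝ} (hx : 1 ≤ x) : arccosh x = Real.arsinh (Real.sqrt (x ^ 2 - 1)) := by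
  have h0 : (0:ℝ) ≤ x := le_trans zero_le_one hx
  rw [Real.arsinh, arccosh, Real.sq_sqrt (by nlinarith), show 1 + (x ^ 2 - 1) = x ^ 2 by ring,
    Real.sqrt_sq h0, add_comm]

lemma cosh_arccosh {x : ℝ} (hx : 1 ≤ x) : Real.cosh (arccosh x) = x := by
  rw [arccosh_eq_arsinh hx, Real.cosh_arsinh, Real.sq_sqrt (by nlinarith),
    show 1 + (x ^ 2 - 1) = x ^ 2 by ring, Real.sqrt_sq (by linarith)]

lemma arccosh_cosh {x : ℝ} (hx : 0 ≤ x) : arccosh (Real.cosh x) = x := by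
  rw [arccosh_eq_arsinh (Real.one_le_cosh x),
    show Real.cosh x ^ 2 - 1 = Real.sinh x ^ 2 by nlinarith [Real.cosh_sq_sub_sinh_sq x],
    Real.sqrt_sq (Real.sinh_nonneg_iff.2 hx), Real.arsinh_sinh]

lemma arccosh_strictMonoOn : StrictMonoOn arccosh (Ici 1) := by
  intro a ha b hb hab
  rw [arccosh_eq_arsinh ha, arccosh_eq_arsinh hb]
  apply Real.arsinh_strictMono
  apply Real.sqrt_lt_sqrt (by nlinarith [mem_Ici.1 ha])
  have := mem_Ici.1 ha
  nlinarith

lemma arccosh_nonneg {x : ℝ} (hx : 1 ≤ x) : 0 ≤ arccosh x := by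
  rcases eq_or_lt_of_le hx with h | h
  · rw [← h, arccosh_one]
  · rw [← arccosh_one]; exact (arccosh_strictMonoOn (mem_Ici.2 le_rfl) (mem_Ici.2 hx) h).le

lemma arccosh_continuousOn : ContinuousOn arccosh (Ici 1) := by
  apply ContinuousOn.log
  · exact continuousOn_id.add
      (Real.continuous_sqrt.comp_continuousOn ((continuousOn_id.pow 2).sub continuousOn_const))
  · intro x hx
    have h1 := mem_Ici.1 hx
    have : 0 ≤ Real.sqrt (x ^ 2 - 1) := Real.sqrt_nonneg _
    positivity

theorem stmt7 (L k : ℝ) (hL : 0 < L) (hk : 1 ≤ k)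
    (l lk θ₁ θk : ℝ)
    (hl : l = Real.arsinh (1 / (2 * Real.sinh L)))
    (hlk : lk = Real.arsinh (1 / (2 * Real.sinh (k * L))))
    (hθ₁ : Real.cos θ₁ = Real.tanh L) (hθ₁' : θ₁ ∈ Set.Icc 0 (π / 2))
    (hθk : Real.cos θk = Real.tanh (k * L)) (hθk' : θk ∈ Set.Icc 0 (π / 2))
    (C Ck : Set (ℝ × ℝ))
    (hC : C = Set.Icc 1 (Real.exp (2 * l)) ×ˢ Set.Icc θ₁ (π / 2))
    (hCk : Ck = Set.Icc 1 (Real.exp (2 * lk)) ×ˢ Set.Icc θk (π / 2))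
    (h : ℝ × ℝ → ℝ × ℝ)
    (hh : ∀ p : ℝ × ℝ,
      h p = (p.1 ^ (lk / l), Real.arccos (Real.tanh (k * arccosh (1 / Real.sin p.2))))) :
    ∃ φ : C ≃ₜ Ck, ∀ x : C, (φ x : ℝ × ℝ) = h x := by
  have hpi := Real.pi_pos
  have hk0 : 0 < k := lt_of_lt_of_le one_pos hk
  have hkL : 0 < k * L := mul_pos hk0 hL
  have hsL : 0 < Real.sinh L := Real.sinh_pos_iff.2 hL
  have hskL : 0 < Real.sinh (k * L) := Real.sinh_pos_iff.2 hkL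
  have hl0 : 0 < l := by rw [hl]; exact Real.arsinh_pos_iff.2 (by positivity)
  have hlk0 : 0 < lk := by rw [hlk]; exact Real.arsinh_pos_iff.2 (by positivity)
  set E := Real.exp (2 * l) with hE
  set Ek := Real.exp (2 * lk) with hEk
  set f1 : ℝ → ℝ := fun R => R ^ (lk / l) with hf1
  set f2 : ℝ → ℝ := fun θ => Real.arccos (Real.tanh (k * arccosh (1 / Real.sin θ))) with hf2
  have hkey : ∀ p : ℝ × ℝ, h p = (f1 p.1, f2 p.2) := fun p => hh p
  -- θ₁ > 0
  have hθ₁0 : 0 < θ₁ := by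
    rcases eq_or_lt_of_le hθ₁'.1 with h0 | h0
    · exfalso
      have := my_tanh_lt_one L
      rw [← hθ₁, ← h0, Real.cos_zero] at this
      exact lt_irrefl 1 this
    · exact h0
  -- sin θ₁ = 1 / cosh L
  have hcL := Real.cosh_pos L
  have hsin₁ : Real.sin θ₁ = 1 / Real.cosh L := by
    rw [Real.sin_eq_sqrt_one_sub_cos_sq hθ₁'.1 (le_trans hθ₁'.2 (by linarith)), hθ₁,
      show 1 - Real.tanh L ^ 2 = (1 / Real.cosh L) ^ 2 by
        rw [Real.tanh_eq_sinh_div_cosh]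
        field_simp; linarith [Real.cosh_sq_sub_sinh_sq L]]
    exact Real.sqrt_sq (by positivity)
  -- basic facts about sin on [θ₁, π/2]
  have hsin_facts : ∀ θ ∈ Set.Icc θ₁ (π / 2),
      0 < Real.sin θ ∧ 1 ≤ 1 / Real.sin θ ∧ 1 / Real.sin θ ≤ Real.cosh L := by
    intro θ hθ
    have hpos : 0 < Real.sin θ :=
      Real.sin_pos_of_pos_of_lt_pi (lt_of_lt_of_le hθ₁0 hθ.1) (lt_of_le_of_lt hθ.2 (by linarith))
    have hle1 : Real.sin θ ≤ 1 := Real.sin_le_one θ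
    have hge : Real.sin θ₁ ≤ Real.sin θ := by
      apply Real.strictMonoOn_sin.monotoneOn ⟨by linarith [hθ₁'.1], le_trans hθ₁'.2 (by linarith)⟩
        ⟨by linarith [hθ₁'.1, hθ.1], hθ.2⟩ hθ.1
    refine ⟨hpos, ?_, ?_⟩
    · rw [le_div_iff₀ hpos]; linarith
    · rw [div_le_iff₀ hpos]
      rw [hsin₁] at hge
      calc (1:ℝ) = Real.cosh L * (1 / Real.cosh L) := by field_simp
        _ ≤ Real.cosh L * Real.sin θ := by
            exact mul_le_mul_of_nonneg_left hge hcL.le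
  -- strict monotonicity of f2
  have hmono2 : StrictMonoOn f2 (Set.Icc θ₁ (π / 2)) := by
    intro a ha b hb hab
    obtain ⟨hpa, h1a, _⟩ := hsin_facts a ha
    obtain ⟨hpb, h1b, _⟩ := hsin_facts b hb
    have hsab : Real.sin a < Real.sin b := by
      apply Real.strictMonoOn_sin ⟨by linarith [hθ₁'.1, ha.1], ha.2⟩
        ⟨by linarith [hθ₁'.1, hb.1], hb.2⟩ hab
    have hinv : 1 / Real.sin b < 1 / Real.sin a := by
      apply one_div_lt_one_div_of_lt hpa hsab
    have harc : arccosh (1 / Real.sin b) < arccosh (1 / Real.sin a) :=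
      arccosh_strictMonoOn (Set.mem_Ici.2 h1b) (Set.mem_Ici.2 h1a) hinv
    have htanh : Real.tanh (k * arccosh (1 / Real.sin b)) <
        Real.tanh (k * arccosh (1 / Real.sin a)) :=
      my_tanh_strictMono (by nlinarith)
    have hnn : ∀ x : ℝ, 1 ≤ x → Real.tanh (k * arccosh x) ∈ Set.Icc (-1 : ℝ) 1 := by
      intro x hx
      constructor
      · have := my_tanh_nonneg (mul_nonneg hk0.le (arccosh_nonneg hx))
        linarith
      · exact (my_tanh_lt_one _).le
    exact Real.strictAntiOn_arccos (hnn _ h1b) (hnn _ h1a) htanh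
  -- endpoints of f2
  have hend2b : f2 (π / 2) = π / 2 := by
    simp only [hf2, Real.sin_pi_div_two]
    norm_num [arccosh_one, Real.arccos_zero]
  have hend2a : f2 θ₁ = θk := by
    simp only [hf2]
    rw [hsin₁, one_div_one_div, arccosh_cosh hL.le, ← hθk,
      Real.arccos_cos hθk'.1 (le_trans hθk'.2 (by linarith))]
  -- continuity of f2
  have cont2 : ContinuousOn f2 (Set.Icc θ₁ (π / 2)) := by
    apply Real.continuous_arccos.comp_continuousOn
    apply my_tanh_continuous.comp_continuousOn
    apply ContinuousOn.mul continuousOn_const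
    apply arccosh_continuousOn.comp
    · exact continuousOn_const.div Real.continuous_sin.continuousOn
        (fun θ hθ => (hsin_facts θ hθ).1.ne')
    · exact fun θ hθ => Set.mem_Ici.2 (hsin_facts θ hθ).2.1
  -- f1 facts
  have hmono1 : StrictMonoOn f1 (Set.Icc 1 E) := by
    intro a ha b hb hab
    exact Real.rpow_lt_rpow (le_trans zero_le_one ha.1) hab (div_pos hlk0 hl0)
  have hend1a : f1 1 = 1 := Real.one_rpow _
  have hend1b : f1 E = Ek := by
    simp only [hf1, hE, hEk, ← Real.exp_mul]
    congr 1
    field_simp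
  have cont1 : ContinuousOn f1 (Set.Icc 1 E) := by
    intro x hx
    exact (Real.continuousAt_rpow_const x _ (Or.inl (by linarith [hx.1]))).continuousWithinAt
  have h1E : (1 : ℝ) ≤ E := Real.one_le_exp (by positivity)
  have hθhalf : θ₁ ≤ π / 2 := hθ₁'.2
  -- surjectivity of components
  have hsurj1 : Set.Icc (1 : ℝ) Ek ⊆ f1 '' Set.Icc 1 E := by
    have := intermediate_value_Icc h1E cont1
    rwa [hend1a, hend1b] at this
  have hsurj2 : Set.Icc θk (π / 2) ⊆ f2 '' Set.Icc θ₁ (π / 2) := by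
    have := intermediate_value_Icc hθhalf cont2
    rwa [hend2a, hend2b] at this
  -- maps to
  have hmapsTo : Set.MapsTo h C Ck := by
    intro p hp
    rw [hC] at hp
    rw [hCk, hkey]
    refine ⟨⟨?_, ?_⟩, ⟨?_, ?_⟩⟩
    · rw [← hend1a]
      exact hmono1.monotoneOn ⟨le_rfl, h1E⟩ hp.1 hp.1.1
    · rw [← hend1b]
      exact hmono1.monotoneOn hp.1 ⟨h1E, le_rfl⟩ hp.1.2
    · rw [← hend2a]
      exact hmono2.monotoneOn ⟨le_rfl, hθhalf⟩ hp.2 hp.2.1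
    · rw [← hend2b]
      exact hmono2.monotoneOn hp.2 ⟨hθhalf, le_rfl⟩ hp.2.2
  -- injectivity
  have hinj : Set.InjOn h C := by
    rw [hC]
    intro p hp q hq hpq
    rw [hkey, hkey] at hpq
    exact Prod.ext (hmono1.injOn hp.1 hq.1 (congrArg Prod.fst hpq))
      (hmono2.injOn hp.2 hq.2 (congrArg Prod.snd hpq))
  -- surjectivity
  have hsurj : Ck ⊆ h '' C := by
    rw [hC, hCk]
    rintro ⟨y1, y2⟩ hy
    obtain ⟨x1, hx1, hfx1⟩ := hsurj1 hy.1
    obtain ⟨x2, hx2, hfx2⟩ := hsurj2 hy.2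
    exact ⟨(x1, x2), ⟨hx1, hx2⟩, by rw [hkey]; exact Prod.ext hfx1 hfx2⟩
  -- continuity of h on C
  have hcont : ContinuousOn h C := by
    have hcont' : ContinuousOn (fun p : ℝ × ℝ => (f1 p.1, f2 p.2)) C := by
      rw [hC]
      exact (cont1.comp continuous_fst.continuousOn fun p hp => hp.1).prodMk
        (cont2.comp continuous_snd.continuousOn fun p hp => hp.2)
    exact hcont'.congr fun p _ => hkey p
  -- compactness
  have : CompactSpace C := isCompact_iff_compactSpace.mp
    (by rw [hC]; exact isCompact_Icc.prod isCompact_Icc)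
  -- package
  let F : C → Ck := fun x => ⟨h x, hmapsTo x.2⟩
  have hFbij : Function.Bijective F := by
    constructor
    · intro a b hab
      exact Subtype.ext (hinj a.2 b.2 (congrArg Subtype.val hab))
    · intro y
      obtain ⟨x, hx, hxy⟩ := hsurj y.2
      exact ⟨⟨x, hx⟩, Subtype.ext hxy⟩
  have hFcont : Continuous F := hcont.restrict.subtype_mk _
  exact ⟨Continuous.homeoOfEquivCompactToT2 (f := Equiv.ofBijective F hFbij) hFcont,
    fun x => rfl⟩
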